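/- Symmetrization identity for the H(div) advection operator (identity (5.2), div case): Let u, β : ℝ³ → ℝ³ be differentiable at a point x ∈ ℝ³. Then (L^{div}_β u)(x) + ((L^{div}_β)^* u)(x) = −(Dβ(x) + Dβ(x)ᵀ) u(x) + (div β)(x) u(x); that is, β(x) (div u)(x) − curl(β × u)(x) − ∇(β·u)(x) − (curl u)(x) × β(x) = −(Dβ(x) + Dβ(x)ᵀ − (div β)(x) I) u(x). -/

import Mathlib

open Finset

noncomputable section

/-- Points of `ℝ³`. -/
abbrev V3 := Fin 3 → ℝ

/-- Euclidean dot product on `ℝ³`. -/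
def dot3 (a b : V3) : ℝ := ∑ i, a i * b i

/-- Cross product on `ℝ³`. -/
def cross3 (a b : V3) : V3 :=
  ![a 1 * b 2 - a 2 * b 1, a 2 * b 0 - a 0 * b 2, a 0 * b 1 - a 1 * b 0]

/-- The `j`-th standard basis vector of `ℝ³`. -/
def e3 (j : Fin 3) : V3 := Pi.single j 1

/-- Partial derivative `∂ⱼ wᵢ (x)` of a vector field `w : ℝ³ → ℝ³`. -/
def pd (w : V3 → V3) (x : V3) (i j : Fin 3) : ℝ := fderiv ℝ w x (e3 j) i

/-- Divergence `div w = ∂₁w₁ + ∂₂w₂ + ∂₃w₃` of a vector field at a point. -/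
def divg (w : V3 → V3) (x : V3) : ℝ := ∑ i, pd w x i i

/-- Curl `(∂₂w₃ − ∂₃w₂, ∂₃w₁ − ∂₁w₃, ∂₁w₂ − ∂₂w₁)` of a vector field at a point
(0-based indices). -/
def curl3 (w : V3 → V3) (x : V3) : V3 :=
  ![pd w x 2 1 - pd w x 1 2, pd w x 0 2 - pd w x 2 0, pd w x 1 0 - pd w x 0 1]

/-- Gradient `∇f = (∂₁f, ∂₂f, ∂₃f)` of a scalar function at a point. -/
def grad3 (f : V3 → ℝ) (x : V3) : V3 := fun j => fderiv ℝ f x (e3 j)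

/-- Jacobian matrix `Dw(x)` with entries `(Dw)ᵢⱼ = ∂ⱼwᵢ`. -/
def jac (w : V3 → V3) (x : V3) : Matrix (Fin 3) (Fin 3) ℝ :=
  Matrix.of fun i j => pd w x i j

/-- The `H(curl)` advection operator `L^curl_β u = ∇(β·u) + (curl u) × β`. -/
def Lcurl (β u : V3 → V3) (x : V3) : V3 :=
  grad3 (fun y => dot3 (β y) (u y)) x + cross3 (curl3 u x) (β x)

/-- Formal adjoint `(L^curl_β)^* u = −β (div u) + curl(β × u)`. -/
def LcurlAdj (β u : V3 → V3) (x : V3) : V3 :=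
  -(divg u x • β x) + curl3 (fun y => cross3 (β y) (u y)) x

/-- The `H(div)` advection operator `L^div_β u = β (div u) − curl(β × u)`. -/
def Ldiv (β u : V3 → V3) (x : V3) : V3 :=
  divg u x • β x - curl3 (fun y => cross3 (β y) (u y)) x

/-- Formal adjoint `(L^div_β)^* u = −∇(β·u) − (curl u) × β`. -/
def LdivAdj (β u : V3 → V3) (x : V3) : V3 :=
  -grad3 (fun y => dot3 (β y) (u y)) x - cross3 (curl3 u x) (β x)

end


section Aux

lemma diff_comp (x : V3) (w : V3 → V3) (hw : DifferentiableAt ℝ w x) (i : Fin 3) :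
    DifferentiableAt ℝ (fun y => w y i) x :=
  (ContinuousLinearMap.proj (R := ℝ) (φ := fun _ : Fin 3 => ℝ) i).differentiableAt.comp x hw

lemma fderiv_comp_eval (x : V3) (w : V3 → V3) (hw : DifferentiableAt ℝ w x) (i : Fin 3)
    (v : V3) : fderiv ℝ (fun y => w y i) x v = fderiv ℝ w x v i := by
  have h : HasFDerivAt (fun y => w y i)
      ((ContinuousLinearMap.proj (R := ℝ) (φ := fun _ : Fin 3 => ℝ) i).comp (fderiv ℝ w x)) x :=
    (ContinuousLinearMap.proj (R := ℝ) (φ := fun _ : Fin 3 => ℝ) i).hasFDerivAt.comp x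
      hw.hasFDerivAt
  rw [h.fderiv]; rfl

lemma fderiv_mul_pd (u β : V3 → V3) (x : V3)
    (hu : DifferentiableAt ℝ u x) (hβ : DifferentiableAt ℝ β x) (i k j : Fin 3) :
    fderiv ℝ (fun y => β y i * u y k) x (e3 j) =
      pd β x i j * u x k + β x i * pd u x k j := by
  rw [fderiv_fun_mul (diff_comp x β hβ i) (diff_comp x u hu k)]
  simp only [ContinuousLinearMap.add_apply, ContinuousLinearMap.smul_apply, smul_eq_mul,
    fderiv_comp_eval x β hβ, fderiv_comp_eval x u hu]
  unfold pd; ring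

lemma diff_cross (u β : V3 → V3) (x : V3)
    (hu : DifferentiableAt ℝ u x) (hβ : DifferentiableAt ℝ β x) :
    DifferentiableAt ℝ (fun y => cross3 (β y) (u y)) x := by
  rw [show (fun y => cross3 (β y) (u y)) =
      (fun y (i : Fin 3) => cross3 (β y) (u y) i) from rfl]
  apply differentiableAt_pi.2
  intro i
  fin_cases i <;> simp only [cross3, Matrix.cons_val_zero, Matrix.cons_val_one, Matrix.head_cons,
    Matrix.cons_val_two, Matrix.tail_cons, Fin.isValue] <;>
  exact ((diff_comp x β hβ _).mul (diff_comp x u hu _)).sub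
    ((diff_comp x β hβ _).mul (diff_comp x u hu _))

lemma fin3_mk_two : (⟨2, by norm_num⟩ : Fin 3) = 2 := rfl

lemma pd_cross (u β : V3 → V3) (x : V3)
    (hu : DifferentiableAt ℝ u x) (hβ : DifferentiableAt ℝ β x) (i j : Fin 3) :
    pd (fun y => cross3 (β y) (u y)) x i j =
      cross3 (fun k => pd β x k j) (u x) i + cross3 (β x) (fun k => pd u x k j) i := by
  have h := fderiv_comp_eval x _ (diff_cross u β x hu hβ) i (e3 j)
  rw [pd, ← h]
  fin_cases i <;>
  · simp only [cross3, Fin.isValue, Fin.mk_zero, Fin.mk_one, Matrix.cons_val_zero,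
      Matrix.cons_val_one, Matrix.head_cons, Matrix.cons_val_two, Matrix.tail_cons,
      Matrix.cons_val_fin_one, id_eq, fin3_mk_two]
    rw [fderiv_fun_sub ((diff_comp x β hβ _).fun_mul (diff_comp x u hu _))
      ((diff_comp x β hβ _).fun_mul (diff_comp x u hu _))]
    simp only [ContinuousLinearMap.sub_apply, fderiv_mul_pd u β x hu hβ]
    ring

lemma grad_dot (u β : V3 → V3) (x : V3)
    (hu : DifferentiableAt ℝ u x) (hβ : DifferentiableAt ℝ β x) (j : Fin 3) :
    grad3 (fun y => dot3 (β y) (u y)) x j =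
      dot3 (fun k => pd β x k j) (u x) + dot3 (β x) (fun k => pd u x k j) := by
  have hrw : (fun y => dot3 (β y) (u y)) =
      fun y => β y 0 * u y 0 + β y 1 * u y 1 + β y 2 * u y 2 := by
    funext y; simp [dot3, Fin.sum_univ_three]
  rw [grad3, hrw]
  rw [fderiv_fun_add (((diff_comp x β hβ _).fun_mul (diff_comp x u hu _)).fun_add
      ((diff_comp x β hβ _).fun_mul (diff_comp x u hu _)))
      ((diff_comp x β hβ _).fun_mul (diff_comp x u hu _)),
    fderiv_fun_add ((diff_comp x β hβ _).fun_mul (diff_comp x u hu _))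
      ((diff_comp x β hβ _).fun_mul (diff_comp x u hu _))]
  simp only [ContinuousLinearMap.add_apply, fderiv_mul_pd u β x hu hβ, dot3, Fin.sum_univ_three]
  ring

end Aux

/-- **Symmetrization identity for the `H(div)` advection operator** (identity
(5.2), div case): for `u, β` differentiable at `x`,
`L^div_β u + (L^div_β)^* u = −(Dβ + Dβᵀ) u + (div β) u` at `x`. -/
theorem div_symmetrization_identity
    (u β : V3 → V3) (x : V3)
    (hu : DifferentiableAt ℝ u x) (hβ : DifferentiableAt ℝ β x) :
    Ldiv β u x + LdivAdj β u x =
      -((jac β x + (jac β x).transpose).mulVec (u x)) + divg β x • u x := by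
  funext i
  simp only [Ldiv, LdivAdj, Pi.add_apply, Pi.sub_apply, Pi.neg_apply, Pi.smul_apply,
    smul_eq_mul, Matrix.mulVec, dotProduct, Matrix.add_apply, Matrix.transpose_apply,
    jac, Matrix.of_apply, Fin.sum_univ_three, curl3, grad_dot u β x hu hβ,
    pd_cross u β x hu hβ, divg]
  fin_cases i <;>
  · simp [cross3, dot3, Fin.sum_univ_three]
    ring
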